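/- Full amplification factor bound for the ARS(2,2,2) scheme: let β = 1 − √2/2, let 0 ≤ σ_e ≤ 1, σ_i ≥ 0, and let c, s ∈ ℝ with c² + s² = 1. Setting z = (1 − c) + i s ∈ ℂ, the amplification factor g = (1 − (β − 1) σ_e z)/(1 + β σ_i z) − ((1 − β) σ_i + (2 − β) σ_e) z (1 − β σ_e z)/(1 + β σ_i z)² satisfies |g| ≤ 1. -/

import Mathlib

private lemma ars_Q_bound (r e t : ℝ) (hr : r ^ 2 = 2) (hr0 : 0 ≤ r)
    (he : 0 ≤ e) (he1 : e ≤ 1) (ht : 0 ≤ t) :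
    -6*t^2 + 4*t^2*r - 20*t^3 + 14*t^3*r - 17*t^4 + 12*t^4*r - 4*e*t + 4*e*t*r
      - 12*e*t^2 + 8*e*t^2*r + 2*e^2 + 6*e^2*t - 6*e^2*t*r + 12*e^2*t^2
      - 8*e^2*t^2*r - 2*e^3 - 4*e^3*t + 4*e^3*t*r + e^4 ≤ e + t := by
  have hr1 : 1 ≤ r := by nlinarith
  have hr2 : r ≤ 17/12 := by nlinarith
  have h0 : 0 ≤ e * (1 - e) * (1 - e + e^2) := by
    have : (0:ℝ) ≤ 1 - e + e^2 := by nlinarith [sq_nonneg (2*e - 1)]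
    have := mul_nonneg (mul_nonneg he (by linarith : (0:ℝ) ≤ 1 - e)) this
    linarith
  have h1 : 0 ≤ t * (3 - 2*r) := mul_nonneg ht (by linarith)
  have h2 : 0 ≤ (2*(r - 1)) * (t * ((1 - e) * (2*e^2 - e + 1))) := by
    have h2a : (0:ℝ) ≤ 2*e^2 - e + 1 := by nlinarith [sq_nonneg (2*e - 1)]
    exact mul_nonneg (by linarith) (mul_nonneg ht (mul_nonneg (by linarith) h2a))
  have h3 : 0 ≤ (6 - 4*r) * t^2 := mul_nonneg (by linarith) (sq_nonneg t)
  have h4 : 0 ≤ (12 - 8*r) * ((e * (1 - e)) * t^2) :=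
    mul_nonneg (by linarith)
      (mul_nonneg (mul_nonneg he (by linarith)) (sq_nonneg t))
  have h5 : 0 ≤ (20 - 14*r) * t^3 :=
    mul_nonneg (by linarith) (pow_nonneg ht 3)
  have h6 : 0 ≤ (17 - 12*r) * t^4 :=
    mul_nonneg (by linarith) (pow_nonneg ht 4)
  nlinarith [h0, h1, h2, h3, h4, h5, h6]

set_option maxHeartbeats 2000000 in
private lemma ars_real (r e t c s : ℝ) (hr : r ^ 2 = 2) (hr0 : 0 ≤ r)
    (he : 0 ≤ e) (he1 : e ≤ 1) (ht : 0 ≤ t) (hcs : c ^ 2 + s ^ 2 = 1) :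
    (1 + t - t*r - e + e*t*r + (-1/2)*e*t*r^2 + e^2 + (-1/4)*e^2*r^2 - s^2*e*t*r
      + (1/2)*s^2*e*t*r^2 - s^2*e^2 + (1/4)*s^2*e^2*r^2 - c*t + c*t*r + c*e
      - 2*c*e*t*r + c*e*t*r^2 - 2*c*e^2 + (1/2)*c*e^2*r^2 + c^2*e*t*r
      + (-1/2)*c^2*e*t*r^2 + c^2*e^2 + (-1/4)*c^2*e^2*r^2)^2
    + (s*t - s*t*r - s*e + 2*s*e*t*r - s*e*t*r^2 + 2*s*e^2 + (-1/2)*s*e^2*r^2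
      - 2*c*s*e*t*r + c*s*e*t*r^2 - 2*c*s*e^2 + (1/2)*c*s*e^2*r^2)^2
    ≤ ((1 + t + (-1/2)*t*r - c*t + (1/2)*c*t*r)^2 + (s*t + (-1/2)*s*t*r)^2)^2 := by
  have hs2 : s ^ 2 = 1 - c ^ 2 := by linarith
  have hc1 : c ≤ 1 := by nlinarith [sq_nonneg s, sq_nonneg (c - 1)]
  have hcm : -1 ≤ c := by nlinarith [sq_nonneg s, sq_nonneg (c + 1)]
  have hQ := ars_Q_bound r e t hr hr0 he he1 ht
  have hQx : (1 - c)^2 * (-6*t^2 + 4*t^2*r - 20*t^3 + 14*t^3*r - 17*t^4 + 12*t^4*r - 4*e*t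
      + 4*e*t*r - 12*e*t^2 + 8*e*t^2*r + 2*e^2 + 6*e^2*t - 6*e^2*t*r + 12*e^2*t^2
      - 8*e^2*t^2*r - 2*e^3 - 4*e^3*t + 4*e^3*t*r + e^4) ≤ 2*(1 - c)*(e + t) := by
    have hA : 0 ≤ (1 - c)^2 * (e + t - (-6*t^2 + 4*t^2*r - 20*t^3 + 14*t^3*r
        - 17*t^4 + 12*t^4*r - 4*e*t + 4*e*t*r - 12*e*t^2 + 8*e*t^2*r + 2*e^2
        + 6*e^2*t - 6*e^2*t*r + 12*e^2*t^2 - 8*e^2*t^2*r - 2*e^3 - 4*e^3*t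
        + 4*e^3*t*r + e^4)) :=
      mul_nonneg (sq_nonneg _) (by linarith)
    have hB : 0 ≤ ((1 - c) * (1 + c)) * (e + t) :=
      mul_nonneg (mul_nonneg (by linarith) (by linarith)) (by linarith)
    nlinarith [hA, hB]
  have hID : (1 + t - t*r - e + e*t*r + (-1/2)*e*t*r^2 + e^2 + (-1/4)*e^2*r^2 - s^2*e*t*r
      + (1/2)*s^2*e*t*r^2 - s^2*e^2 + (1/4)*s^2*e^2*r^2 - c*t + c*t*r + c*e
      - 2*c*e*t*r + c*e*t*r^2 - 2*c*e^2 + (1/2)*c*e^2*r^2 + c^2*e*t*r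
      + (-1/2)*c^2*e*t*r^2 + c^2*e^2 + (-1/4)*c^2*e^2*r^2)^2
    + (s*t - s*t*r - s*e + 2*s*e*t*r - s*e*t*r^2 + 2*s*e^2 + (-1/2)*s*e^2*r^2
      - 2*c*s*e*t*r + c*s*e*t*r^2 - 2*c*s*e^2 + (1/2)*c*s*e^2*r^2)^2
    - ((1 + t + (-1/2)*t*r - c*t + (1/2)*c*t*r)^2 + (s*t + (-1/2)*s*t*r)^2)^2
    = (1 - c)^2 * (-6*t^2 + 4*t^2*r - 20*t^3 + 14*t^3*r - 17*t^4 + 12*t^4*r - 4*e*t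
      + 4*e*t*r - 12*e*t^2 + 8*e*t^2*r + 2*e^2 + 6*e^2*t - 6*e^2*t*r + 12*e^2*t^2
      - 8*e^2*t^2*r - 2*e^3 - 4*e^3*t + 4*e^3*t*r + e^4) - 2*(1 - c)*(e + t) := by
    linear_combination
      (-t^2 + (1/2)*t^2*r^2 - 4*t^3 + 6*t^3*r - 3*t^3*r^2 + (1/2)*t^3*r^3 - 3*t^4
        + 6*t^4*r + (-9/2)*t^4*r^2 + (3/2)*t^4*r^3 + (-3/16)*t^4*r^4 - 2*e*t + e*t*r^2
        + 2*e*t^2*r - 3*e*t^2*r^2 + e*t^2*r^3 - e^2 + (1/2)*e^2*r^2 + 2*e^2*t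
        - 4*e^2*t*r + (1/2)*e^2*t*r^2 + (1/2)*e^2*t*r^3 + 3*e^2*t^2*r^2 - 3*e^2*t^2*r^3
        + (3/4)*e^2*t^2*r^4 - 2*e^3 + (1/2)*e^3*r^2 + 6*e^3*t*r - 3*e^3*t*r^2
        + (-3/2)*e^3*t*r^3 + (3/4)*e^3*t*r^4 + 3*e^4 + (-3/2)*e^4*r^2 + (3/16)*e^4*r^4
        - s^2*t^4 + 2*s^2*t^4*r + (-3/2)*s^2*t^4*r^2 + (1/2)*s^2*t^4*r^3
        + (-1/16)*s^2*t^4*r^4 + s^2*e^2*t^2*r^2 - s^2*e^2*t^2*r^3 + (1/4)*s^2*e^2*t^2*r^4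
        + 2*s^2*e^3*t*r - s^2*e^3*t*r^2 + (-1/2)*s^2*e^3*t*r^3 + (1/4)*s^2*e^3*t*r^4
        + s^2*e^4 + (-1/2)*s^2*e^4*r^2 + (1/16)*s^2*e^4*r^4 + 4*c*t^3 - 6*c*t^3*r
        + 3*c*t^3*r^2 + (-1/2)*c*t^3*r^3 + 4*c*t^4 - 8*c*t^4*r + 6*c*t^4*r^2
        - 2*c*t^4*r^3 + (1/4)*c*t^4*r^4 - 2*c*e*t^2*r + 3*c*e*t^2*r^2 - c*e*t^2*r^3
        - 2*c*e^2*t + 4*c*e^2*t*r + (-1/2)*c*e^2*t*r^2 + (-1/2)*c*e^2*t*r^3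
        - 4*c*e^2*t^2*r^2 + 4*c*e^2*t^2*r^3 - c*e^2*t^2*r^4 + 2*c*e^3 + (-1/2)*c*e^3*r^2
        - 8*c*e^3*t*r + 4*c*e^3*t*r^2 + 2*c*e^3*t*r^3 - c*e^3*t*r^4 - 4*c*e^4
        + 2*c*e^4*r^2 + (-1/4)*c*e^4*r^4 - c^2*t^4 + 2*c^2*t^4*r + (-3/2)*c^2*t^4*r^2
        + (1/2)*c^2*t^4*r^3 + (-1/16)*c^2*t^4*r^4 + c^2*e^2*t^2*r^2 - c^2*e^2*t^2*r^3
        + (1/4)*c^2*e^2*t^2*r^4 + 2*c^2*e^3*t*r - c^2*e^3*t*r^2 + (-1/2)*c^2*e^3*t*r^3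
        + (1/4)*c^2*e^3*t*r^4 + c^2*e^4 + (-1/2)*c^2*e^4*r^2 + (1/16)*c^2*e^4*r^4) * hs2
      + (-6*t^3 + t^3*r + (-13/2)*t^4 + 2*t^4*r + (-1/4)*t^4*r^2 - 6*e*t^2 + 2*e*t^2*r
        + e^2*t + e^2*t*r + 6*e^2*t^2 - 4*e^2*t^2*r + e^2*t^2*r^2 + e^3 - 2*e^3*t
        - 2*e^3*t*r + e^3*t*r^2 + (-3/2)*e^4 + (1/4)*e^4*r^2 + c*t^2 + 12*c*t^3
        - 2*c*t^3*r + 13*c*t^4 - 4*c*t^4*r + (1/2)*c*t^4*r^2 + 2*c*e*t + 12*c*e*t^2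
        - 4*c*e*t^2*r + c*e^2 - 2*c*e^2*t - 2*c*e^2*t*r - 12*c*e^2*t^2 + 8*c*e^2*t^2*r
        - 2*c*e^2*t^2*r^2 - 2*c*e^3 + 4*c*e^3*t + 4*c*e^3*t*r - 2*c*e^3*t*r^2 + 3*c*e^4
        + (-1/2)*c*e^4*r^2 - c^2*t^2 - 6*c^2*t^3 + c^2*t^3*r + (-13/2)*c^2*t^4
        + 2*c^2*t^4*r + (-1/4)*c^2*t^4*r^2 - 2*c^2*e*t - 6*c^2*e*t^2 + 2*c^2*e*t^2*r
        - c^2*e^2 + c^2*e^2*t + c^2*e^2*t*r + 6*c^2*e^2*t^2 - 4*c^2*e^2*t^2*r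
        + c^2*e^2*t^2*r^2 + c^2*e^3 - 2*c^2*e^3*t - 2*c^2*e^3*t*r + c^2*e^3*t*r^2
        + (-3/2)*c^2*e^4 + (1/4)*c^2*e^4*r^2) * hr
  linarith [hID, hQx]

set_option maxHeartbeats 2000000 in
/-- Full amplification factor bound for the ARS(2,2,2) scheme: with
`z = (1 - c) + i s` on a Fourier mode, under `0 ≤ σe ≤ 1` and `σi ≥ 0`, the
amplification factor `g` has modulus at most one, uniformly in `σi`. -/
theorem ARS222_amplification_bound (β σe σi c s : ℝ)
    (hβ : β = 1 - Real.sqrt 2 / 2)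
    (hσe : 0 ≤ σe) (hCFL : σe ≤ 1) (hσi : 0 ≤ σi)
    (hcs : c ^ 2 + s ^ 2 = 1) :
    ‖(1 - ((β : ℂ) - 1) * (σe : ℂ) * ((1 - (c : ℂ)) + (s : ℂ) * Complex.I))
          / (1 + (β : ℂ) * (σi : ℂ) * ((1 - (c : ℂ)) + (s : ℂ) * Complex.I))
        - ((1 - (β : ℂ)) * (σi : ℂ) + (2 - (β : ℂ)) * (σe : ℂ))
          * ((1 - (c : ℂ)) + (s : ℂ) * Complex.I)
          * (1 - (β : ℂ) * (σe : ℂ) * ((1 - (c : ℂ)) + (s : ℂ) * Complex.I))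
          / (1 + (β : ℂ) * (σi : ℂ) * ((1 - (c : ℂ)) + (s : ℂ) * Complex.I)) ^ 2‖
      ≤ 1 := by
  have hr : (Real.sqrt 2) ^ 2 = 2 := Real.sq_sqrt (by norm_num)
  have hr0 : 0 ≤ Real.sqrt 2 := Real.sqrt_nonneg 2
  set r : ℝ := Real.sqrt 2 with hrdef
  have hr2 : r ≤ 2 := by nlinarith
  have hc1 : c ≤ 1 := by nlinarith [sq_nonneg s, sq_nonneg (c - 1)]
  have hb0 : 0 ≤ β := by rw [hβ]; linarith
  set z : ℂ := (1 - (c : ℂ)) + (s : ℂ) * Complex.I with hz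
  set w : ℂ := 1 + (β : ℂ) * (σi : ℂ) * z with hwdef
  have hwre : w.re = 1 + β * σi * (1 - c) := by
    simp [hwdef, hz, Complex.add_re, Complex.mul_re, Complex.mul_im,
      Complex.sub_re, Complex.sub_im, Complex.one_re, Complex.one_im,
      Complex.ofReal_re, Complex.ofReal_im, Complex.I_re, Complex.I_im]
  have hw : w ≠ 0 := by
    intro h
    rw [h] at hwre
    have h1 : (0:ℝ) ≤ β * σi * (1 - c) :=
      mul_nonneg (mul_nonneg hb0 hσi) (by linarith)
    simp [Complex.zero_re] at hwre
    linarith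
  set N : ℂ := (1 - ((β : ℂ) - 1) * (σe : ℂ) * z) * w
      - ((1 - (β : ℂ)) * (σi : ℂ) + (2 - (β : ℂ)) * (σe : ℂ)) * z
        * (1 - (β : ℂ) * (σe : ℂ) * z) with hN
  have key : (1 - ((β : ℂ) - 1) * (σe : ℂ) * z) / w
      - ((1 - (β : ℂ)) * (σi : ℂ) + (2 - (β : ℂ)) * (σe : ℂ)) * z
        * (1 - (β : ℂ) * (σe : ℂ) * z) / w ^ 2 = N / w ^ 2 := by
    rw [hN]
    field_simp
  rw [key, norm_div, norm_pow]
  rw [div_le_one (pow_pos (norm_pos_iff.mpr hw) 2)]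
  refine le_of_pow_le_pow_left₀ two_ne_zero (by positivity) ?_
  rw [Complex.sq_norm, Complex.sq_norm]
  simp only [hN, hwdef, hz, Complex.normSq_apply, Complex.add_re, Complex.add_im,
    Complex.sub_re, Complex.sub_im, Complex.mul_re, Complex.mul_im, Complex.one_re,
    Complex.one_im, Complex.ofReal_re, Complex.ofReal_im, Complex.I_re, Complex.I_im,
    Complex.re_ofNat, Complex.im_ofNat]
  rw [hβ]
  linarith [ars_real r σe σi c s hr hr0 hσe hCFL hσi hcs]
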